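/- Let p be an odd prime and 0 ≤ s < n. In F_p[y_1,...,y_n]: [0,1,...,ŝ,...,n-1, n+2] = L_n · (Q_{n,n-1}^{p^2+p} Q_{n,s} − Q_{n,n-2}^{p^2} Q_{n,s} + Q_{n,s-2}^{p^2} − Q_{n,s-1}^p Q_{n,n-1}^{p^2}), with the convention Q_{n,t} = 0 for t < 0. -/

import Mathlib

open MvPolynomial Finset

/-- `br p e = det (y_i ^ (p ^ e_j))` in `F_p[y_1,…,y_n]`. -/
noncomputable def br (p : ℕ) {n : ℕ} (e : Fin n → ℕ) : MvPolynomial (Fin n) (ZMod p) :=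
  Matrix.det (Matrix.of fun i j : Fin n => (X i : MvPolynomial (Fin n) (ZMod p)) ^ p ^ e j)

/-- `L_n = [0,1,…,n-1]`. -/
noncomputable def Lpoly (p n : ℕ) : MvPolynomial (Fin n) (ZMod p) :=
  br p (fun j : Fin n => (j : ℕ))

/-- `L_{n,s} = [0,…,ŝ,…,n]`. -/
noncomputable def Ls (p n s : ℕ) : MvPolynomial (Fin n) (ZMod p) :=
  br p (fun j : Fin n => if (j : ℕ) < s then (j : ℕ) else (j : ℕ) + 1)

lemma coe_succAbove {n : ℕ} (q : Fin (n+1)) (b : Fin n) :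
    ((q.succAbove b) : ℕ) = if (b:ℕ) < (q:ℕ) then (b:ℕ) else (b:ℕ)+1 := by
  rw [Fin.succAbove]
  rcases lt_or_ge (Fin.castSucc b) q with h | h
  · rw [if_pos h, Fin.coe_castSucc, if_pos (by simpa [Fin.lt_def] using h)]
  · rw [if_neg (not_lt.mpr h), Fin.val_succ,
      if_neg (by simpa [Fin.le_def] using h)]

lemma br_congr (p : ℕ) {n : ℕ} {e e' : Fin n → ℕ} (h : ∀ j, e j = e' j) :
    br p e = br p e' := by
  have : e = e' := funext h
  rw [this]

lemma Ls_self (p n : ℕ) : Ls p n n = Lpoly p n :=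
  br_congr p fun j => if_pos j.isLt

lemma br_pow (p : ℕ) (hp : p.Prime) {n : ℕ} (e : Fin n → ℕ) (k : ℕ) :
    br p e ^ p ^ k = br p (fun j => e j + k) := by
  haveI := Fact.mk hp
  have h := (iterateFrobenius (MvPolynomial (Fin n) (ZMod p)) p k).map_det
    (Matrix.of fun i j : Fin n => (X i : MvPolynomial (Fin n) (ZMod p)) ^ p ^ e j)
  rw [iterateFrobenius_def] at h
  rw [br, br, h]
  congr 1
  ext i j
  simp only [RingHom.mapMatrix_apply, Matrix.map_apply, Matrix.of_apply, iterateFrobenius_def,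
    ← pow_mul, ← pow_add]

lemma br_zero (p : ℕ) {n : ℕ} (e : Fin n → ℕ) {j1 j2 : Fin n} (hne : j1 ≠ j2)
    (h : e j1 = e j2) : br p e = 0 :=
  Matrix.det_zero_of_column_eq hne (fun i => by simp [h])

lemma det_updateColumn_sum' {R : Type*} [CommRing R] {n : ℕ} (A : Matrix (Fin n) (Fin n) R)
    (c : Fin n) {ι : Type*} (s : Finset ι) (f : ι → Fin n → R) :
    (A.updateCol c (fun i => ∑ j ∈ s, f j i)).det
      = ∑ j ∈ s, (A.updateCol c (f j)).det := by
  classical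
  induction s using Finset.induction_on with
  | empty =>
      simp only [Finset.sum_empty]
      exact Matrix.det_eq_zero_of_column_eq_zero c (fun i => by simp [Matrix.updateCol_apply])
  | @insert a t hk ih =>
      simp only [Finset.sum_insert hk]
      have h2 := Matrix.det_updateCol_add A c (f a) (fun i => ∑ j ∈ t, f j i)
      rw [show (f a + fun i => ∑ j ∈ t, f j i) = fun i => f a i + ∑ j ∈ t, f j i from rfl] at h2
      rw [h2, ih]

-- fundamental relation: each variable is a root of the Dickson q-polynomial
lemma rel (p : ℕ) {m : ℕ} (i : Fin (m+1)) :
    Lpoly p (m+1) * X i ^ p ^ (m+1) =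
      ∑ j : Fin (m+1),
        (-1 : MvPolynomial (Fin (m+1)) (ZMod p)) ^ (m + (j:ℕ)) * Ls p (m+1) (j:ℕ)
          * X i ^ p ^ (j:ℕ) := by
  classical
  set N : Matrix (Fin (m+2)) (Fin (m+2)) (MvPolynomial (Fin (m+1)) (ZMod p)) :=
    Matrix.of fun a b =>
      (X (if h : (a:ℕ) < m+1 then (⟨(a:ℕ), h⟩ : Fin (m+1)) else i) : MvPolynomial (Fin (m+1)) (ZMod p)) ^ p ^ (b:ℕ) with hN
  have hrow : N (Fin.castSucc i) = N (Fin.last (m+1)) := by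
    funext b
    simp [hN, Fin.is_lt]
  have hdet0 : N.det = 0 :=
    Matrix.det_zero_of_row_eq (by
      intro h
      have := congrArg (Fin.val) h
      simp [Fin.coe_castSucc, Fin.val_last] at this
      omega) hrow
  have hexp := Matrix.det_succ_row N (Fin.last (m+1))
  rw [hdet0] at hexp
  -- identify terms
  have hterm : ∀ j : Fin (m+2),
      (-1 : MvPolynomial (Fin (m+1)) (ZMod p)) ^ ((Fin.last (m+1) : ℕ) + (j:ℕ)) * N (Fin.last (m+1)) j *
        (N.submatrix (Fin.last (m+1)).succAbove j.succAbove).det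
      = (-1) ^ ((m+1) + (j:ℕ)) * Ls p (m+1) (j:ℕ) * X i ^ p ^ (j:ℕ) := by
    intro j
    have h1 : N (Fin.last (m+1)) j = X i ^ p ^ (j:ℕ) := by
      simp [hN]
    have h2 : (N.submatrix (Fin.last (m+1)).succAbove j.succAbove).det = Ls p (m+1) (j:ℕ) := by
      have : (N.submatrix (Fin.last (m+1)).succAbove j.succAbove) =
          Matrix.of fun a b : Fin (m+1) =>
            (X a : MvPolynomial (Fin (m+1)) (ZMod p)) ^ p ^ (if (b:ℕ) < (j:ℕ) then (b:ℕ) else (b:ℕ)+1) := by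
        ext a b
        simp only [Matrix.submatrix_apply, hN, Matrix.of_apply, Fin.succAbove_last_apply]
        rw [coe_succAbove]
        congr 1
        simp [Fin.coe_castSucc, Fin.is_lt, Fin.is_le]
      rw [this]
      rfl
    rw [h1, h2, Fin.val_last]
    ring
  rw [Finset.sum_congr rfl (fun j _ => hterm j)] at hexp
  rw [Fin.sum_univ_castSucc] at hexp
  simp only [Fin.coe_castSucc, Fin.val_last] at hexp
  have hLs : Ls p (m+1) (m+1) = Lpoly p (m+1) := Ls_self p (m+1)
  rw [hLs] at hexp
  have hsign : ((-1 : MvPolynomial (Fin (m+1)) (ZMod p)) ^ ((m+1) + (m+1))) = 1 := by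
    rw [← two_mul, pow_mul]; simp
  rw [hsign, one_mul] at hexp
  have h3 := eq_neg_of_add_eq_zero_right hexp.symm
  rw [h3, ← Finset.sum_neg_distrib]
  refine Finset.sum_congr rfl fun j _ => ?_
  have h4 : (m+1+(j:ℕ)) = (m+(j:ℕ))+1 := by omega
  rw [h4, pow_succ]
  ring

lemma rel_pow (p : ℕ) (hp : p.Prime) (hodd : Odd p) {m : ℕ} (k : ℕ) (i : Fin (m+1)) :
    Lpoly p (m+1) ^ p ^ k * X i ^ p ^ (m+1+k) =
      ∑ j : Fin (m+1),
        (-1 : MvPolynomial (Fin (m+1)) (ZMod p)) ^ (m + (j:ℕ)) * (Ls p (m+1) (j:ℕ)) ^ p ^ k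
          * X i ^ p ^ ((j:ℕ)+k) := by
  haveI := Fact.mk hp
  have h := congrArg (iterateFrobenius (MvPolynomial (Fin (m+1)) (ZMod p)) p k) (rel p i)
  rw [map_mul, map_sum] at h
  simp only [iterateFrobenius_def] at h
  calc Lpoly p (m+1) ^ p ^ k * X i ^ p ^ (m+1+k)
      = Lpoly p (m+1) ^ p ^ k * (X i ^ p ^ (m+1)) ^ p ^ k := by
        rw [← pow_mul, ← pow_add]
    _ = ∑ j : Fin (m+1),
        (-1 : MvPolynomial (Fin (m+1)) (ZMod p)) ^ (m + (j:ℕ)) * (Ls p (m+1) (j:ℕ)) ^ p ^ k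
          * X i ^ p ^ ((j:ℕ)+k) := by
        rw [h]
        refine Finset.sum_congr rfl fun j _ => ?_
        rw [mul_pow, mul_pow, ← pow_mul (X i), ← pow_add]
        congr 1
        congr 1
        rw [← pow_mul, mul_comm (m + (j:ℕ)), pow_mul]
        congr 1
        exact (hodd.pow).neg_one_pow

lemma expand (p : ℕ) (hp : p.Prime) (hodd : Odd p) {m : ℕ} (e : Fin (m+1) → ℕ) (k : ℕ)
    (he : e (Fin.last m) = m+1+k) :
    Lpoly p (m+1) ^ p ^ k * br p e =
      ∑ j : Fin (m+1),
        (-1 : MvPolynomial (Fin (m+1)) (ZMod p)) ^ (m + (j:ℕ)) * (Ls p (m+1) (j:ℕ)) ^ p ^ k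
          * br p (Function.update e (Fin.last m) ((j:ℕ)+k)) := by
  classical
  set M : Matrix (Fin (m+1)) (Fin (m+1)) (MvPolynomial (Fin (m+1)) (ZMod p)) :=
    Matrix.of fun i j => (X i : MvPolynomial (Fin (m+1)) (ZMod p)) ^ p ^ e j with hM
  have hcol : ∀ i : Fin (m+1),
      Lpoly p (m+1) ^ p ^ k * M i (Fin.last m) =
        ∑ j : Fin (m+1),
          ((-1 : MvPolynomial (Fin (m+1)) (ZMod p)) ^ (m + (j:ℕ)) * (Ls p (m+1) (j:ℕ)) ^ p ^ k)
            * X i ^ p ^ ((j:ℕ)+k) := by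
    intro i
    have h0 : M i (Fin.last m) = X i ^ p ^ (m+1+k) := by rw [hM]; simp [he]
    rw [h0]
    exact rel_pow p hp hodd k i
  calc Lpoly p (m+1) ^ p ^ k * br p e
      = Lpoly p (m+1) ^ p ^ k * (M.updateCol (Fin.last m) (fun i => M i (Fin.last m))).det := by
        rw [Matrix.updateCol_eq_self]; rfl
    _ = (M.updateCol (Fin.last m)
          (Lpoly p (m+1) ^ p ^ k • fun i => M i (Fin.last m))).det := by
        rw [Matrix.det_updateCol_smul]
    _ = (M.updateCol (Fin.last m) (fun i => ∑ j : Fin (m+1),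
          ((-1 : MvPolynomial (Fin (m+1)) (ZMod p)) ^ (m + (j:ℕ)) * (Ls p (m+1) (j:ℕ)) ^ p ^ k)
            * X i ^ p ^ ((j:ℕ)+k))).det := by
        have hv : (Lpoly p (m+1) ^ p ^ k • fun i => M i (Fin.last m))
            = (fun i => ∑ j : Fin (m+1),
              ((-1 : MvPolynomial (Fin (m+1)) (ZMod p)) ^ (m + (j:ℕ)) * (Ls p (m+1) (j:ℕ)) ^ p ^ k)
                * X i ^ p ^ ((j:ℕ)+k)) := by
          funext i
          rw [Pi.smul_apply, smul_eq_mul]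
          exact hcol i
        rw [hv]
    _ = ∑ j : Fin (m+1), (M.updateCol (Fin.last m)
          (fun i => ((-1 : MvPolynomial (Fin (m+1)) (ZMod p)) ^ (m + (j:ℕ)) * (Ls p (m+1) (j:ℕ)) ^ p ^ k)
            * X i ^ p ^ ((j:ℕ)+k))).det := by
        exact det_updateColumn_sum' M (Fin.last m) Finset.univ _
    _ = ∑ j : Fin (m+1),
        (-1 : MvPolynomial (Fin (m+1)) (ZMod p)) ^ (m + (j:ℕ)) * (Ls p (m+1) (j:ℕ)) ^ p ^ k
          * br p (Function.update e (Fin.last m) ((j:ℕ)+k)) := by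
        refine Finset.sum_congr rfl fun j _ => ?_
        have h1 : (M.updateCol (Fin.last m)
            (((-1 : MvPolynomial (Fin (m+1)) (ZMod p)) ^ (m + (j:ℕ)) * (Ls p (m+1) (j:ℕ)) ^ p ^ k)
              • (fun i => X i ^ p ^ ((j:ℕ)+k)))).det
            = ((-1 : MvPolynomial (Fin (m+1)) (ZMod p)) ^ (m + (j:ℕ)) * (Ls p (m+1) (j:ℕ)) ^ p ^ k)
              * (M.updateCol (Fin.last m) (fun i => X i ^ p ^ ((j:ℕ)+k))).det :=
          Matrix.det_updateCol_smul M (Fin.last m) _ _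
        rw [show (fun i : Fin (m+1) => ((-1 : MvPolynomial (Fin (m+1)) (ZMod p)) ^ (m + (j:ℕ)) * (Ls p (m+1) (j:ℕ)) ^ p ^ k)
              * X i ^ p ^ ((j:ℕ)+k)) = (((-1 : MvPolynomial (Fin (m+1)) (ZMod p)) ^ (m + (j:ℕ)) * (Ls p (m+1) (j:ℕ)) ^ p ^ k)
              • (fun i : Fin (m+1) => X i ^ p ^ ((j:ℕ)+k))) from rfl, h1]
        congr 1
        have : M.updateCol (Fin.last m) (fun i => X i ^ p ^ ((j:ℕ)+k))
            = Matrix.of fun i j' => (X i : MvPolynomial (Fin (m+1)) (ZMod p)) ^ p ^ (Function.update e (Fin.last m) ((j:ℕ)+k) j') := by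
          ext i j' : 2
          rw [Matrix.updateCol_apply, Matrix.of_apply, Function.update_apply]
          split <;> rfl
        rw [this]
        rfl

lemma br_perm (p : ℕ) {n : ℕ} (e : Fin n → ℕ) (σ : Equiv.Perm (Fin n)) :
    br p (fun j => e (σ j)) = (Equiv.Perm.sign σ : ℤ) * br p e := by
  have h := Matrix.det_permute' σ
    (Matrix.of fun i j : Fin n => (X i : MvPolynomial (Fin n) (ZMod p)) ^ p ^ e j)
  have h2 : ((Matrix.of fun i j : Fin n => (X i : MvPolynomial (Fin n) (ZMod p)) ^ p ^ e j).submatrix id σ)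
      = Matrix.of fun i j : Fin n => (X i : MvPolynomial (Fin n) (ZMod p)) ^ p ^ e (σ j) := rfl
  rw [h2] at h
  simpa [br] using h

lemma br_cycle (p : ℕ) {m : ℕ} (s : ℕ) (hs : s ≤ m) :
    br p (fun j : Fin (m+1) => if (j:ℕ) < s then (j:ℕ) else if (j:ℕ) < m then (j:ℕ)+1 else s) =
      (-1 : MvPolynomial (Fin (m+1)) (ZMod p)) ^ (m - s) * Lpoly p (m+1) := by
  obtain ⟨d, hd⟩ : ∃ d, s + d = m := ⟨m - s, by omega⟩
  clear hs
  induction d generalizing s with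
  | zero =>
      have hsm : s = m := by omega
      rw [hsm, Nat.sub_self, pow_zero, one_mul]
      exact br_congr p (fun j => by have := j.isLt; split_ifs <;> omega)
  | succ d ih =>
      have hs' : s + 1 + d = m := by omega
      have hsm : s < m := by omega
      set a : Fin (m+1) := ⟨s, by omega⟩ with ha
      set b : Fin (m+1) := Fin.last m with hb
      have hab : a ≠ b := by
        intro h
        have := congrArg Fin.val h
        simp [ha, hb] at this
        omega
      have hfun : (fun j : Fin (m+1) => if (j:ℕ) < s then (j:ℕ) else if (j:ℕ) < m then (j:ℕ)+1 else s)
          = (fun j : Fin (m+1) =>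
              (fun j' : Fin (m+1) => if (j':ℕ) < s+1 then (j':ℕ) else if (j':ℕ) < m then (j':ℕ)+1 else s+1)
                ((Equiv.swap a b) j)) := by
        funext j
        rcases eq_or_ne j a with rfl | hja
        · rw [Equiv.swap_apply_left]
          simp only [hb, Fin.val_last, ha]
          split_ifs <;> omega
        · rcases eq_or_ne j b with rfl | hjb
          · rw [Equiv.swap_apply_right]
            simp only [ha, hb, Fin.val_last]
            split_ifs <;> omega
          · rw [Equiv.swap_apply_of_ne_of_ne hja hjb]
            have h1 : (j:ℕ) ≠ s := fun h => hja (Fin.ext h)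
            have h2 : (j:ℕ) ≠ m := fun h => hjb (Fin.ext h)
            simp only []
            split_ifs <;> omega
      rw [hfun, br_perm p (fun j' : Fin (m+1) => if (j':ℕ) < s+1 then (j':ℕ) else if (j':ℕ) < m then (j':ℕ)+1 else s+1) (Equiv.swap a b), Equiv.Perm.sign_swap hab, ih (s+1) hs']
      have : m - s = (m - (s+1)) + 1 := by omega
      rw [this, pow_succ]
      push_cast
      ring

lemma Lpoly_ne_zero (p : ℕ) (hp : p.Prime) (n : ℕ) : Lpoly p n ≠ 0 := by
  classical
  haveI := Fact.mk hp
  set D : Fin n →₀ ℕ := ∑ j : Fin n, Finsupp.single j (p ^ (j:ℕ)) with hD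
  have hprod : ∀ σ : Equiv.Perm (Fin n),
      ∏ i : Fin n, (X (σ i) : MvPolynomial (Fin n) (ZMod p)) ^ p ^ (i:ℕ)
        = monomial (∑ i : Fin n, Finsupp.single (σ i) (p ^ (i:ℕ))) (1 : ZMod p) := by
    intro σ
    have : ∀ t : Finset (Fin n), ∏ i ∈ t, (X (σ i) : MvPolynomial (Fin n) (ZMod p)) ^ p ^ (i:ℕ)
        = monomial (∑ i ∈ t, Finsupp.single (σ i) (p ^ (i:ℕ))) (1 : ZMod p) := by
      intro t
      induction t using Finset.induction_on with
      | empty => simp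
      | @insert a t ha ih =>
          rw [Finset.prod_insert ha, Finset.sum_insert ha, ih, X_pow_eq_monomial, monomial_mul,
            one_mul]
    exact this Finset.univ
  have hinj : ∀ σ : Equiv.Perm (Fin n),
      (∑ i : Fin n, Finsupp.single (σ i) (p ^ (i:ℕ))) = D → σ = 1 := by
    intro σ hσ
    ext i0
    have h1 := congrArg (fun f : Fin n →₀ ℕ => f (σ i0)) hσ
    simp only [Finsupp.finset_sum_apply, Finsupp.single_apply, hD] at h1
    rw [Finset.sum_eq_single i0 (fun b _ hb => if_neg (fun h => hb (σ.injective h)))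
      (fun h => absurd (Finset.mem_univ i0) h), if_pos rfl] at h1
    rw [Finset.sum_eq_single (σ i0) (fun b _ hb => if_neg (fun h => hb h))
      (fun h => absurd (Finset.mem_univ (σ i0)) h), if_pos rfl] at h1
    have := Nat.pow_right_injective hp.two_le h1
    simpa using this.symm
  have hcoeff : coeff D (Lpoly p n) = 1 := by
    have step1 : coeff D (Lpoly p n) = ∑ σ : Equiv.Perm (Fin n),
        (Equiv.Perm.sign σ : ℤ) • coeff D
          (monomial (∑ i : Fin n, Finsupp.single (σ i) (p ^ (i:ℕ))) (1 : ZMod p)) := by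
      rw [Lpoly, br, Matrix.det_apply, MvPolynomial.coeff_sum]
      refine Finset.sum_congr rfl fun σ _ => ?_
      rw [Units.smul_def, MvPolynomial.coeff_smul, ← hprod σ]
      rfl
    rw [step1]
    rw [Finset.sum_eq_single (1 : Equiv.Perm (Fin n))]
    · simp only [Equiv.Perm.one_apply, map_one, coeff_monomial, ← hD]
      simp
    · intro σ _ hσ
      rw [coeff_monomial, if_neg (fun h => hσ (hinj σ h))]
      simp
    · intro h
      exact absurd (Finset.mem_univ _) h
  intro h
  haveI := Fact.mk hp.one_lt
  rw [h] at hcoeff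
  simp at hcoeff

def Efun (m s : ℕ) (v : ℕ) : Fin (m+1) → ℕ := fun j =>
  if (j:ℕ) < s then (j:ℕ) else if (j:ℕ) < m then (j:ℕ)+1 else v

lemma Efun_last {m s : ℕ} (hs : s ≤ m) (v : ℕ) : Efun m s v (Fin.last m) = v := by
  simp only [Efun, Fin.val_last]
  split_ifs <;> omega

lemma update_Efun {m s : ℕ} (hs : s ≤ m) (w v : ℕ) :
    Function.update (Efun m s w) (Fin.last m) v = Efun m s v := by
  funext j
  rcases eq_or_ne j (Fin.last m) with rfl | hj
  · rw [Function.update_self, Efun_last hs]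
  · rw [Function.update_of_ne hj]
    have hjm : (j:ℕ) < m := by
      have h1 := j.isLt
      have h2 : (j:ℕ) ≠ m := fun h => hj (Fin.ext (by simp [h]))
      omega
    simp only [Efun]
    split_ifs <;> omega

lemma br_Efun_self (p : ℕ) {m s : ℕ} (hs : s ≤ m) :
    br p (Efun m s s) = (-1 : MvPolynomial (Fin (m+1)) (ZMod p)) ^ (m-s) * Lpoly p (m+1) :=
  br_cycle p s hs

lemma br_Efun_top (p : ℕ) {m s : ℕ} (hs : s ≤ m) :
    br p (Efun m s (m+1)) = Ls p (m+1) s :=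
  br_congr p (fun j => by
    have := j.isLt
    simp only [Efun]
    split_ifs <;> omega)

lemma br_Efun_zero (p : ℕ) {m s : ℕ} (hs : s ≤ m) {v : ℕ} (hv : v ≤ m) (hvs : v ≠ s) :
    br p (Efun m s v) = 0 := by
  rcases lt_or_ge v s with h | h
  · refine br_zero p _ (j1 := ⟨v, by omega⟩) (j2 := Fin.last m) ?_ ?_
    · intro hh
      have := congrArg Fin.val hh
      simp only [Fin.val_last] at this
      omega
    · simp only [Efun, Fin.val_last]
      split_ifs <;> omega
  · refine br_zero p _ (j1 := ⟨v-1, by omega⟩) (j2 := Fin.last m) ?_ ?_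
    · intro hh
      have := congrArg Fin.val hh
      simp only [Fin.val_last] at this
      omega
    · simp only [Efun, Fin.val_last]
      split_ifs <;> omega

lemma expand_Efun (p : ℕ) (hp : p.Prime) (hodd : Odd p) {m s : ℕ} (hs : s ≤ m) (k : ℕ) :
    Lpoly p (m+1) ^ p ^ k * br p (Efun m s (m+1+k)) =
      ∑ j : Fin (m+1),
        (-1 : MvPolynomial (Fin (m+1)) (ZMod p)) ^ (m + (j:ℕ)) * (Ls p (m+1) (j:ℕ)) ^ p ^ k
          * br p (Efun m s ((j:ℕ)+k)) := by
  have h := expand p hp hodd (Efun m s (m+1+k)) k (Efun_last hs _)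
  rw [h]
  exact Finset.sum_congr rfl fun j _ => by rw [update_Efun hs]

lemma sum_ite_coe {R : Type*} [AddCommMonoid R] {m : ℕ} {t : ℕ} (ht : t ≤ m) (c : R) :
    ∑ j : Fin (m+1), (if (j:ℕ) = t then c else 0) = c := by
  have : ∀ j : Fin (m+1), (if (j:ℕ) = t then c else 0)
      = (if j = (⟨t, by omega⟩ : Fin (m+1)) then c else 0) := by
    intro j
    congr 1
    simp [Fin.ext_iff]
  rw [Finset.sum_congr rfl (fun j _ => this j), Finset.sum_ite_eq' Finset.univ _ (fun _ => c)]
  simp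

lemma step2 (p : ℕ) (hp : p.Prime) (hodd : Odd p) {m s : ℕ} (hs : s ≤ m) :
    Lpoly p (m+1) ^ p * br p (Efun m s (m+2)) =
      (Ls p (m+1) m) ^ p * Ls p (m+1) s
        + (if 1 ≤ s then -((Ls p (m+1) (s-1)) ^ p * Lpoly p (m+1)) else 0) := by
  have h := expand_Efun p hp hodd hs 1
  rw [pow_one] at h
  rw [show m+1+1 = m+2 from rfl] at h
  rw [h]
  have hcongr : ∀ j : Fin (m+1),
      (-1 : MvPolynomial (Fin (m+1)) (ZMod p)) ^ (m + (j:ℕ)) * (Ls p (m+1) (j:ℕ)) ^ p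
          * br p (Efun m s ((j:ℕ)+1))
        = (if (j:ℕ) = m then (Ls p (m+1) m) ^ p * Ls p (m+1) s else 0)
          + (if 1 ≤ s ∧ (j:ℕ) = s-1 then -((Ls p (m+1) (s-1)) ^ p * Lpoly p (m+1)) else 0) := by
    intro j
    by_cases hjm : (j:ℕ) = m
    · rw [if_pos hjm, if_neg (by omega), add_zero, hjm, br_Efun_top p hs,
        Even.neg_one_pow ⟨m, rfl⟩, one_mul]
    · by_cases hjs : 1 ≤ s ∧ (j:ℕ) = s-1
      · obtain ⟨hs1, hj⟩ := hjs
        rw [if_neg hjm, if_pos ⟨hs1, hj⟩, zero_add, hj, show s-1+1 = s from by omega,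
          br_Efun_self p hs]
        have hsg : (-1 : MvPolynomial (Fin (m+1)) (ZMod p)) ^ (m + (s-1))
            * (-1 : MvPolynomial (Fin (m+1)) (ZMod p)) ^ (m-s) = -1 := by
          rw [← pow_add, show (m+(s-1))+(m-s) = 2*(m-1)+1 from by omega, pow_succ, pow_mul]
          simp
        calc (-1 : MvPolynomial (Fin (m+1)) (ZMod p)) ^ (m + (s-1)) * (Ls p (m+1) (s-1)) ^ p
              * ((-1 : MvPolynomial (Fin (m+1)) (ZMod p)) ^ (m-s) * Lpoly p (m+1))
            = ((-1 : MvPolynomial (Fin (m+1)) (ZMod p)) ^ (m + (s-1))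
                * (-1 : MvPolynomial (Fin (m+1)) (ZMod p)) ^ (m-s))
                * ((Ls p (m+1) (s-1)) ^ p * Lpoly p (m+1)) := by ring
          _ = -((Ls p (m+1) (s-1)) ^ p * Lpoly p (m+1)) := by rw [hsg]; ring
      · rw [if_neg hjm, if_neg hjs, add_zero,
          br_Efun_zero p hs (v := (j:ℕ)+1) (by have := j.isLt; omega) (by omega), mul_zero]
  rw [Finset.sum_congr rfl (fun j _ => hcongr j), Finset.sum_add_distrib,
    sum_ite_coe (le_refl m)]
  congr 1
  by_cases h1 : 1 ≤ s
  · simp only [h1, true_and]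
    rw [sum_ite_coe (by omega : s-1 ≤ m)]; simp
  · simp only [h1, false_and, if_false, Finset.sum_const_zero]

lemma step1 (p : ℕ) (hp : p.Prime) (hodd : Odd p) {m s : ℕ} (hs : s ≤ m) :
    Lpoly p (m+1) ^ p ^ 2 * br p (Efun m s (m+3)) =
      (if 2 ≤ s then (Ls p (m+1) (s-2)) ^ p ^ 2 * Lpoly p (m+1) else 0)
      + (if 1 ≤ m then -((Ls p (m+1) (m-1)) ^ p ^ 2 * Ls p (m+1) s) else 0)
      + (Ls p (m+1) m) ^ p ^ 2 * br p (Efun m s (m+2)) := by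
  have h := expand_Efun p hp hodd hs 2
  rw [show m+1+2 = m+3 from rfl] at h
  rw [h]
  have hcongr : ∀ j : Fin (m+1),
      (-1 : MvPolynomial (Fin (m+1)) (ZMod p)) ^ (m + (j:ℕ)) * (Ls p (m+1) (j:ℕ)) ^ p ^ 2
          * br p (Efun m s ((j:ℕ)+2))
        = (if 2 ≤ s ∧ (j:ℕ) = s-2 then (Ls p (m+1) (s-2)) ^ p ^ 2 * Lpoly p (m+1) else 0)
          + (if 1 ≤ m ∧ (j:ℕ) = m-1 then -((Ls p (m+1) (m-1)) ^ p ^ 2 * Ls p (m+1) s) else 0)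
          + (if (j:ℕ) = m then (Ls p (m+1) m) ^ p ^ 2 * br p (Efun m s (m+2)) else 0) := by
    intro j
    by_cases hjm : (j:ℕ) = m
    · rw [if_pos hjm, if_neg (by omega), if_neg (by omega), hjm,
        show m+2 = m+2 from rfl, Even.neg_one_pow ⟨m, rfl⟩, one_mul, zero_add, zero_add]
    · by_cases hjm1 : 1 ≤ m ∧ (j:ℕ) = m-1
      · obtain ⟨hm1, hj⟩ := hjm1
        rw [if_neg (by omega), if_pos ⟨hm1, hj⟩, if_neg (by omega), hj,
          show m-1+2 = m+1 from by omega, br_Efun_top p hs, add_zero, zero_add]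
        have hsg : (-1 : MvPolynomial (Fin (m+1)) (ZMod p)) ^ (m + (m-1)) = -1 := by
          rw [show m+(m-1) = 2*(m-1)+1 from by omega, pow_succ, pow_mul]
          simp
        rw [hsg]
        ring
      · by_cases hjs : 2 ≤ s ∧ (j:ℕ) = s-2
        · obtain ⟨hs2, hj⟩ := hjs
          rw [if_pos ⟨hs2, hj⟩, if_neg hjm1, if_neg hjm, add_zero, add_zero, hj,
            show s-2+2 = s from by omega, br_Efun_self p hs]
          have hsg : (-1 : MvPolynomial (Fin (m+1)) (ZMod p)) ^ (m + (s-2))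
              * (-1 : MvPolynomial (Fin (m+1)) (ZMod p)) ^ (m-s) = 1 := by
            rw [← pow_add, show (m+(s-2))+(m-s) = 2*(m-1) from by omega, pow_mul]
            simp
          calc (-1 : MvPolynomial (Fin (m+1)) (ZMod p)) ^ (m + (s-2)) * (Ls p (m+1) (s-2)) ^ p ^ 2
                * ((-1 : MvPolynomial (Fin (m+1)) (ZMod p)) ^ (m-s) * Lpoly p (m+1))
              = ((-1 : MvPolynomial (Fin (m+1)) (ZMod p)) ^ (m + (s-2))
                  * (-1 : MvPolynomial (Fin (m+1)) (ZMod p)) ^ (m-s))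
                  * ((Ls p (m+1) (s-2)) ^ p ^ 2 * Lpoly p (m+1)) := by ring
            _ = (Ls p (m+1) (s-2)) ^ p ^ 2 * Lpoly p (m+1) := by rw [hsg]; ring
        · rw [if_neg hjs, if_neg hjm1, if_neg hjm, add_zero, add_zero,
            br_Efun_zero p hs (v := (j:ℕ)+2) (by have := j.isLt; omega) (by omega), mul_zero]
  rw [Finset.sum_congr rfl (fun j _ => hcongr j), Finset.sum_add_distrib, Finset.sum_add_distrib,
    sum_ite_coe (le_refl m)]
  congr 2
  · by_cases h2 : 2 ≤ s
    · simp only [h2, true_and]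
      rw [sum_ite_coe (by omega : s-2 ≤ m)]
      simp
    · simp only [h2, false_and, if_false, Finset.sum_const_zero]
  · by_cases h1 : 1 ≤ m
    · simp only [h1, true_and]
      rw [sum_ite_coe (by omega : m-1 ≤ m)]
      simp
    · simp only [h1, false_and, if_false, Finset.sum_const_zero]


/-- For `0 ≤ s < n`:
`[0,…,ŝ,…,n-1, n+2] = L_n · (Q_{n,n-1}^{p²+p} Q_{n,s} − Q_{n,n-2}^{p²} Q_{n,s}
  + Q_{n,s-2}^{p²} − Q_{n,s-1}^p Q_{n,n-1}^{p²})`, with `Q_{n,t} = 0` for `t < 0`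
and `Q_{n,n} = 1`.  `Qe : ℤ → _` encodes the Dickson invariants with these conventions. -/
theorem stmt9 (p n s : ℕ) (hp : p.Prime) (hodd : Odd p) (hs : s < n)
    (Qe : ℤ → MvPolynomial (Fin n) (ZMod p))
    (hQe : ∀ t : ℤ, 0 ≤ t → t < n → Lpoly p n * Qe t = Ls p n t.toNat)
    (hQneg : ∀ t : ℤ, t < 0 → Qe t = 0) (hQn : Qe (n : ℤ) = 1) :
    br p (fun j : Fin n =>
        if (j : ℕ) < s then (j : ℕ) else if (j : ℕ) + 1 < n then (j : ℕ) + 1 else n + 2) =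
      Lpoly p n *
        ((Qe ((n : ℤ) - 1)) ^ (p ^ 2 + p) * Qe s - (Qe ((n : ℤ) - 2)) ^ (p ^ 2) * Qe s +
          (Qe ((s : ℤ) - 2)) ^ (p ^ 2) - (Qe ((s : ℤ) - 1)) ^ p * (Qe ((n : ℤ) - 1)) ^ (p ^ 2)) := by
  haveI := Fact.mk hp
  obtain ⟨m, rfl⟩ : ∃ m, n = m + 1 := ⟨n - 1, by omega⟩
  have hsm : s ≤ m := by omega
  have hLne : Lpoly p (m+1) ≠ 0 := Lpoly_ne_zero p hp (m+1)
  have hgoalfun : br p (fun j : Fin (m+1) =>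
      if (j:ℕ) < s then (j:ℕ) else if (j:ℕ) + 1 < m+1 then (j:ℕ) + 1 else (m+1) + 2)
      = br p (Efun m s (m+3)) :=
    br_congr p (fun j => by simp only [Efun]; split_ifs <;> omega)
  rw [hgoalfun]
  apply mul_left_cancel₀ (pow_ne_zero (p^2+p) hLne)
  have h1 := step1 p hp hodd hsm
  have h2 := step2 p hp hodd hsm
  have hmain : Lpoly p (m+1) ^ (p^2+p) * br p (Efun m s (m+3))
      = (if 2 ≤ s then (Ls p (m+1) (s-2)) ^ p ^ 2 * Lpoly p (m+1) else 0) * Lpoly p (m+1) ^ p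
        + (if 1 ≤ m then -((Ls p (m+1) (m-1)) ^ p ^ 2 * Ls p (m+1) s) else 0) * Lpoly p (m+1) ^ p
        + (Ls p (m+1) m) ^ p ^ 2 *
            ((Ls p (m+1) m) ^ p * Ls p (m+1) s
              + (if 1 ≤ s then -((Ls p (m+1) (s-1)) ^ p * Lpoly p (m+1)) else 0)) := by
    rw [← h2]
    calc Lpoly p (m+1) ^ (p^2+p) * br p (Efun m s (m+3))
        = (Lpoly p (m+1) ^ p ^ 2 * br p (Efun m s (m+3))) * Lpoly p (m+1) ^ p := by
          rw [pow_add]; ring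
      _ = _ := by rw [h1]; try ring
  rw [hmain]
  -- Dickson invariant identities
  have hQ1 : Lpoly p (m+1) * Qe ((↑(m+1):ℤ) - 1) = Ls p (m+1) m := by
    rw [hQe _ (by push_cast; omega) (by push_cast; omega)]
    congr 1
    omega
  have hQ3 : Lpoly p (m+1) * Qe (s:ℤ) = Ls p (m+1) s := by
    have h := hQe (s:ℤ) (by omega) (by push_cast; omega)
    simpa using h
  have hQ2b : 1 ≤ m → Lpoly p (m+1) * Qe ((↑(m+1):ℤ) - 2) = Ls p (m+1) (m-1) := by
    intro hm
    rw [hQe _ (by push_cast; omega) (by push_cast; omega)]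
    congr 1
    omega
  have hQ4b : 2 ≤ s → Lpoly p (m+1) * Qe ((s:ℤ) - 2) = Ls p (m+1) (s-2) := by
    intro hs2
    rw [hQe _ (by omega) (by push_cast; omega)]
    congr 1
    omega
  have hQ5b : 1 ≤ s → Lpoly p (m+1) * Qe ((s:ℤ) - 1) = Ls p (m+1) (s-1) := by
    intro hs1
    rw [hQe _ (by omega) (by push_cast; omega)]
    congr 1
    omega
  by_cases h2s : 2 ≤ s
  · have hm1 : 1 ≤ m := by omega
    rw [if_pos h2s, if_pos hm1, if_pos (by omega : 1 ≤ s),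
      ← hQ1, ← hQ3, ← hQ2b hm1, ← hQ4b h2s, ← hQ5b (by omega)]
    ring
  · by_cases h1s : s = 1
    · have hm1 : 1 ≤ m := by omega
      rw [if_neg h2s, if_pos hm1, if_pos (by omega : 1 ≤ s),
        hQneg ((s:ℤ) - 2) (by omega),
        ← hQ1, ← hQ3, ← hQ2b hm1, ← hQ5b (by omega)]
      simp only [zero_pow hp.ne_zero, zero_pow (pow_ne_zero 2 hp.ne_zero)]
      ring
    · have hs0 : s = 0 := by omega
      rw [if_neg h2s, if_neg (by omega : ¬ 1 ≤ s),
        hQneg ((s:ℤ) - 2) (by omega), hQneg ((s:ℤ) - 1) (by omega)]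
      by_cases hm1 : 1 ≤ m
      · rw [if_pos hm1, ← hQ1, ← hQ3, ← hQ2b hm1]
        simp only [zero_pow hp.ne_zero, zero_pow (pow_ne_zero 2 hp.ne_zero)]
        ring
      · have hm0 : m = 0 := by omega
        rw [if_neg hm1, hQneg ((↑(m+1):ℤ) - 2) (by omega), ← hQ1, ← hQ3]
        simp only [zero_pow hp.ne_zero, zero_pow (pow_ne_zero 2 hp.ne_zero)]
        ring
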